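/- The function V₁ restricted to O⁺ has a unique critical point, namely (x_c, x_c, x_c) with x_c = 1+√(1+a). Equivalently, the only solution in O⁺ of the system x² = a+y+z, y² = a+x+z, z² = a+x+y is x = y = z = x_c. -/

import Mathlib

private lemma lyness_sqrt_ge_one {a : ℝ} (ha : 0 < a) : 1 ≤ Real.sqrt (1 + a) := by
  nlinarith [Real.sq_sqrt (show (0:ℝ) ≤ 1 + a by linarith), Real.sqrt_nonneg (1 + a)]

private lemma lyness_xc_sq {a : ℝ} (ha : 0 < a) :
    (1 + Real.sqrt (1 + a)) ^ 2 = a + 2 * (1 + Real.sqrt (1 + a)) := by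
  nlinarith [Real.sq_sqrt (show (0:ℝ) ≤ 1 + a by linarith)]

private lemma lyness_sys_unique {a x y z : ℝ} (ha : 0 < a) (hx : 0 < x) (hy : 0 < y)
    (hz : 0 < z) (h1 : x ^ 2 = a + y + z) (h2 : y ^ 2 = a + x + z)
    (h3 : z ^ 2 = a + x + y) : x = 1 + Real.sqrt (1 + a) := by
  have hxy : x = y := by
    have : (x - y) * (x + y + 1) = 0 := by nlinarith
    rcases mul_eq_zero.1 this with h | h
    · linarith
    · nlinarith
  have hxz : x = z := by
    have : (x - z) * (x + z + 1) = 0 := by nlinarith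
    rcases mul_eq_zero.1 this with h | h
    · linarith
    · nlinarith
  have hq : x ^ 2 = a + 2 * x := by rw [h1, ← hxy, ← hxz]; ring
  have hfac : (x - (1 + Real.sqrt (1 + a))) * (x - (1 - Real.sqrt (1 + a))) = 0 := by
    nlinarith [Real.sq_sqrt (show (0:ℝ) ≤ 1 + a by linarith)]
  rcases mul_eq_zero.1 hfac with h | h
  · linarith
  · have := lyness_sqrt_ge_one ha
    linarith

/-- `V₁` has a unique critical point in the positive octant, namely
`(x_c, x_c, x_c)` with `x_c = 1 + √(1+a)`; equivalently, the only positive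
solution of `x² = a+y+z`, `y² = a+x+z`, `z² = a+x+y` is `x = y = z = x_c`. -/
theorem lyness_V1_unique_critical_point (a : ℝ) (ha : 0 < a) :
    let V1 : ℝ × ℝ × ℝ → ℝ := fun p =>
      (p.1 + 1) * (p.2.1 + 1) * (p.2.2 + 1) * (a + p.1 + p.2.1 + p.2.2) /
        (p.1 * p.2.1 * p.2.2)
    let xc : ℝ := 1 + Real.sqrt (1 + a)
    (∀ p : ℝ × ℝ × ℝ, 0 < p.1 → 0 < p.2.1 → 0 < p.2.2 →
      (fderiv ℝ V1 p = 0 ↔ p = (xc, xc, xc))) ∧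
    (∀ x y z : ℝ, 0 < x → 0 < y → 0 < z →
      ((x ^ 2 = a + y + z ∧ y ^ 2 = a + x + z ∧ z ^ 2 = a + x + y) ↔
        (x = xc ∧ y = xc ∧ z = xc))) := by
  intro V1 xc
  have hxc_pos : 0 < xc := by
    have := lyness_sqrt_ge_one ha
    simp only [xc]; linarith
  have hxc_sq : xc ^ 2 = a + 2 * xc := lyness_xc_sq ha
  -- the algebraic part
  have halg : ∀ x y z : ℝ, 0 < x → 0 < y → 0 < z →
      ((x ^ 2 = a + y + z ∧ y ^ 2 = a + x + z ∧ z ^ 2 = a + x + y) ↔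
        (x = xc ∧ y = xc ∧ z = xc)) := by
    intro x y z hx hy hz
    constructor
    · rintro ⟨h1, h2, h3⟩
      refine ⟨lyness_sys_unique ha hx hy hz h1 h2 h3, ?_, ?_⟩
      · exact lyness_sys_unique ha hy hx hz (by linarith) (by linarith) (by linarith)
      · exact lyness_sys_unique ha hz hx hy (by linarith) (by linarith) (by linarith)
    · rintro ⟨rfl, rfl, rfl⟩
      refine ⟨?_, ?_, ?_⟩ <;> linarith [hxc_sq]
  refine ⟨?_, halg⟩
  rintro ⟨x, y, z⟩ hx hy hz
  simp only at hx hy hz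
  -- set up the derivative
  open ContinuousLinearMap in
  set P1 : ℝ × ℝ × ℝ →L[ℝ] ℝ := ContinuousLinearMap.fst ℝ ℝ (ℝ × ℝ) with hP1
  set P2 : ℝ × ℝ × ℝ →L[ℝ] ℝ :=
    (ContinuousLinearMap.fst ℝ ℝ ℝ).comp (ContinuousLinearMap.snd ℝ ℝ (ℝ × ℝ)) with hP2
  set P3 : ℝ × ℝ × ℝ →L[ℝ] ℝ :=
    (ContinuousLinearMap.snd ℝ ℝ ℝ).comp (ContinuousLinearMap.snd ℝ ℝ (ℝ × ℝ)) with hP3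
  set E : ℝ × ℝ × ℝ →L[ℝ] ℝ :=
      ((x + 1) * (y + 1) * (z + 1) * (a + x + y + z)) •
          ((-((x * y * z) ^ 2)⁻¹) • ((x * y) • P3 + z • (x • P2 + y • P1))) +
        (x * y * z)⁻¹ •
          (((x + 1) * (y + 1) * (z + 1)) • (P1 + P2 + P3) +
            (a + x + y + z) •
              (((x + 1) * (y + 1)) • P3 + (z + 1) • ((x + 1) • P2 + (y + 1) • P1)))
      with hEdef
  have hx' : x ≠ 0 := ne_of_gt hx
  have hy' : y ≠ 0 := ne_of_gt hy
  have hz' : z ≠ 0 := ne_of_gt hz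
  have hne : (x, y, z).1 * (x, y, z).2.1 * (x, y, z).2.2 ≠ 0 := by
    simp only; positivity
  have h1 : HasFDerivAt (fun p : ℝ × ℝ × ℝ => p.1) P1 (x, y, z) := hasFDerivAt_fst
  have h2 : HasFDerivAt (fun p : ℝ × ℝ × ℝ => p.2.1) P2 (x, y, z) :=
    hasFDerivAt_fst.comp _ hasFDerivAt_snd
  have h3 : HasFDerivAt (fun p : ℝ × ℝ × ℝ => p.2.2) P3 (x, y, z) :=
    hasFDerivAt_snd.comp _ hasFDerivAt_snd
  have hF := (((h1.add_const 1).mul (h2.add_const 1)).mul (h3.add_const 1)).mul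
      (((h1.const_add a).add h2).add h3)
  have hG := (h1.mul h2).mul h3
  have hinv : HasFDerivAt (fun q : ℝ × ℝ × ℝ => (q.1 * q.2.1 * q.2.2)⁻¹)
      ((-((x * y * z) ^ 2)⁻¹) • ((x * y) • P3 + z • (x • P2 + y • P1)))
      (x, y, z) := (hasDerivAt_inv hne).comp_hasFDerivAt (x, y, z) hG
  have hV : HasFDerivAt V1 E (x, y, z) := by
    have h : HasFDerivAt (fun q : ℝ × ℝ × ℝ =>
        ((q.1 + 1) * (q.2.1 + 1) * (q.2.2 + 1) * (a + q.1 + q.2.1 + q.2.2)) *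
          (q.1 * q.2.1 * q.2.2)⁻¹) E (x, y, z) := hF.mul hinv
    have hfun : V1 = fun q : ℝ × ℝ × ℝ =>
        ((q.1 + 1) * (q.2.1 + 1) * (q.2.2 + 1) * (a + q.1 + q.2.1 + q.2.2)) *
          (q.1 * q.2.1 * q.2.2)⁻¹ := by
      funext q; simp [V1, div_eq_mul_inv]
    rw [hfun]
    exact h
  have hfd : fderiv ℝ V1 (x, y, z) = E := hV.fderiv
  rw [hfd]
  -- evaluations of E at basis vectors
  have hev1 : ∀ w : ℝ × ℝ × ℝ, E w =
      -((x + 1) * (y + 1) * (z + 1) * (a + x + y + z) *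
          (((x * y * z) ^ 2)⁻¹ * (x * y * w.2.2 + z * (x * w.2.1 + y * w.1)))) +
        (x * y * z)⁻¹ *
          ((x + 1) * (y + 1) * (z + 1) * (w.1 + w.2.1 + w.2.2) +
            (a + x + y + z) *
              ((x + 1) * (y + 1) * w.2.2 + (z + 1) * ((x + 1) * w.2.1 + (y + 1) * w.1))) := by
    intro w
    rw [hEdef]
    simp [hP1, hP2, hP3]
    ring
  constructor
  · intro h0
    have e1 := congrArg (fun L : ℝ × ℝ × ℝ →L[ℝ] ℝ => L ((1:ℝ), (0:ℝ), (0:ℝ))) h0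
    have e2 := congrArg (fun L : ℝ × ℝ × ℝ →L[ℝ] ℝ => L ((0:ℝ), (1:ℝ), (0:ℝ))) h0
    have e3 := congrArg (fun L : ℝ × ℝ × ℝ →L[ℝ] ℝ => L ((0:ℝ), (0:ℝ), (1:ℝ))) h0
    simp only [hev1, ContinuousLinearMap.zero_apply] at e1 e2 e3
    norm_num at e1 e2 e3
    field_simp at e1 e2 e3
    have k1 : x ^ 2 = a + y + z := by
      have h : (x ^ 2 - (a + y + z)) * (x * y ^ 2 * z ^ 2 * (y + 1) * (z + 1)) = 0 := by
        linear_combination (x * y ^ 2 * z ^ 2) * e1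
      rcases mul_eq_zero.1 h with h | h
      · linarith
      · exfalso; have : 0 < x * y ^ 2 * z ^ 2 * (y + 1) * (z + 1) := by positivity
        linarith
    have k2 : y ^ 2 = a + x + z := by
      have h : (y ^ 2 - (a + x + z)) * (x ^ 2 * y * z ^ 2 * (x + 1) * (z + 1)) = 0 := by
        linear_combination (x ^ 2 * y * z ^ 2) * e2
      rcases mul_eq_zero.1 h with h | h
      · linarith
      · exfalso; have : 0 < x ^ 2 * y * z ^ 2 * (x + 1) * (z + 1) := by positivity
        linarith
    have k3 : z ^ 2 = a + x + y := by
      have h : (z ^ 2 - (a + x + y)) * (x ^ 2 * y ^ 2 * z * (x + 1) * (y + 1)) = 0 := by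
        linear_combination (x ^ 2 * y ^ 2 * z) * e3
      rcases mul_eq_zero.1 h with h | h
      · linarith
      · exfalso; have : 0 < x ^ 2 * y ^ 2 * z * (x + 1) * (y + 1) := by positivity
        linarith
    obtain ⟨hx1, hy1, hz1⟩ := (halg x y z hx hy hz).1 ⟨k1, k2, k3⟩
    simp [hx1, hy1, hz1]
  · intro hp
    obtain ⟨hx1, hy1, hz1⟩ : x = xc ∧ y = xc ∧ z = xc := by
      simpa [Prod.ext_iff] using hp
    obtain ⟨k1, k2, k3⟩ := (halg x y z hx hy hz).2 ⟨hx1, hy1, hz1⟩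
    refine ContinuousLinearMap.ext fun w => ?_
    rw [hev1 w, ContinuousLinearMap.zero_apply]
    field_simp
    linear_combination (y * z * (y + 1) * (z + 1) * w.1) * k1 +
      (x * z * (x + 1) * (z + 1) * w.2.1) * k2 +
      (x * y * (x + 1) * (y + 1) * w.2.2) * k3
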